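/- Let α be an irrational real number and ρ ∈ ℝ, and let a(n) = ⌊α(n+1) + ρ⌋ − ⌊αn + ρ⌋ − ⌊α⌋. Then there is no periodic sequence p : ℕ → ℤ such that the set {n ∈ ℕ : a(n) ≠ p(n)} has upper Banach density zero. -/

import Mathlib

/-- A set of natural numbers has upper Banach density zero. -/
def UBDZero (Z : Set ℕ) : Prop :=
  ∀ ε : ℝ, 0 < ε → ∃ l₀ : ℕ, ∀ m l : ℕ, l₀ ≤ l →
    (Nat.card (Z ∩ Set.Ico m (m + l) : Set ℕ) : ℝ) ≤ ε * l

private lemma sturmian_telescope (α ρ : ℝ) (a : ℕ → ℤ)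
    (ha : ∀ n : ℕ, a n = ⌊α * (n + 1) + ρ⌋ - ⌊α * n + ρ⌋ - ⌊α⌋) (m L : ℕ) :
    ∑ i ∈ Finset.range L, a (m + i) = ⌊α * (m + L) + ρ⌋ - ⌊α * m + ρ⌋ - L * ⌊α⌋ := by
  induction L with
  | zero => simp
  | succ L ih =>
    rw [Finset.sum_range_succ, ih, ha (m + L)]
    push_cast
    ring_nf

private lemma periodic_block_sum (p : ℕ → ℤ) (d : ℕ) (hd : 1 ≤ d)
    (hp : ∀ n, p (n + d) = p n) (m : ℕ) :
    ∑ i ∈ Finset.range d, p (m + i) = ∑ i ∈ Finset.range d, p i := by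
  induction m with
  | zero => simp
  | succ m ih =>
    rw [← ih]
    obtain ⟨e, rfl⟩ : ∃ e, d = e + 1 := ⟨d - 1, by omega⟩
    rw [Finset.sum_range_succ, Finset.sum_range_succ']
    have h3 : p (m + 1 + e) = p (m + 0) := by
      rw [show m + 1 + e = m + (e + 1) from by omega, hp m, Nat.add_zero]
    rw [h3]
    congr 1
    refine Finset.sum_congr rfl fun i _ => ?_
    congr 1
    omega

private lemma periodic_multi_block_sum (p : ℕ → ℤ) (d : ℕ) (hd : 1 ≤ d)
    (hp : ∀ n, p (n + d) = p n) (m k : ℕ) :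
    ∑ i ∈ Finset.range (k * d), p (m + i) = k * ∑ i ∈ Finset.range d, p i := by
  induction k with
  | zero => simp
  | succ k ih =>
    have : (k + 1) * d = k * d + d := by ring
    rw [this, Finset.sum_range_add, ih]
    have : ∀ i, m + (k * d + i) = (m + k * d) + i := fun i => by omega
    simp only [this]
    rw [periodic_block_sum p d hd hp (m + k * d)]
    push_cast
    ring

theorem sturmian_not_almost_periodic (α ρ : ℝ) (hα : Irrational α) (a : ℕ → ℤ)
    (ha : ∀ n : ℕ, a n = ⌊α * (n + 1) + ρ⌋ - ⌊α * n + ρ⌋ - ⌊α⌋) :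
    ¬ ∃ p : ℕ → ℤ, (∃ d : ℕ, 1 ≤ d ∧ ∀ n, p (n + d) = p n) ∧
      UBDZero {n | a n ≠ p n} := by
  rintro ⟨p, ⟨d, hd, hp⟩, hZ⟩
  set S : ℤ := ∑ i ∈ Finset.range d, p i with hS
  -- the key irrational quantity
  set c : ℝ := α * d - (d * ⌊α⌋ + S) with hc
  have hcirr : Irrational c := by
    have h1 : Irrational ((d : ℤ) * α) := by
      refine (hα.intCast_mul ?_)
      exact_mod_cast (by omega : (d : ℤ) ≠ 0)
    have h2 : Irrational ((d : ℤ) * α - (((d : ℤ) * ⌊α⌋ + S : ℤ) : ℝ)) := h1.sub_intCast _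
    have : c = (d : ℤ) * α - (((d : ℤ) * ⌊α⌋ + S : ℤ) : ℝ) := by
      push_cast [hc]; ring
    rw [this]
    exact h2
  have hcne : c ≠ 0 := by exact_mod_cast hcirr.ne_int 0
  have hcpos : 0 < |c| := abs_pos.mpr hcne
  -- choose k with k * |c| ≥ 1
  obtain ⟨k₀, hk₀⟩ := exists_nat_ge (1 / |c|)
  set k : ℕ := max k₀ 1 with hkdef
  have hk1 : 1 ≤ k := le_max_right _ _
  have hkc : 1 ≤ (k : ℝ) * |c| := by
    have h1 : 1 / |c| ≤ (k : ℝ) := le_trans hk₀ (by exact_mod_cast le_max_left k₀ 1)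
    calc (1 : ℝ) = (1 / |c|) * |c| := by field_simp
    _ ≤ (k : ℝ) * |c| := by nlinarith
  set L : ℕ := k * d with hL
  have hLpos : 1 ≤ L := Nat.one_le_iff_ne_zero.mpr (by positivity)
  -- find a window of length L where a = p throughout
  have hwin : ∃ m : ℕ, ∀ i < L, a (m + i) = p (m + i) := by
    by_contra hbad
    push_neg at hbad
    choose f hf1 hf2 using hbad
    set ε : ℝ := 1 / (2 * L) with hε
    have hεpos : 0 < ε := by positivity
    obtain ⟨l₀, hl₀⟩ := hZ ε hεpos
    set N : ℕ := l₀ + 1 with hN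
    have hcard := hl₀ 0 (N * L) (le_trans (by omega) (Nat.le_mul_of_pos_right N (by omega)))
    -- the injection
    set g : ℕ → ℕ := fun j => j * L + f (j * L) with hg
    have hgZ : ∀ j, g j ∈ {n | a n ≠ p n} := fun j => hf2 (j * L)
    have hgbd : ∀ j, j * L ≤ g j ∧ g j < (j + 1) * L := by
      intro j
      have h5 := hf1 (j * L)
      have h6 : (j + 1) * L = j * L + L := by ring
      constructor
      · exact Nat.le_add_right _ _
      · have h7 : g j < j * L + L := by
          show j * L + f (j * L) < j * L + L
          omega
        omega
    set Sfin : Set ℕ := {n | a n ≠ p n} ∩ Set.Ico 0 (0 + N * L) with hSfin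
    have hfin : Sfin.Finite := Set.Finite.inter_of_right (Set.finite_Ico _ _) _
    have hmem : ∀ j ∈ Finset.range N, g j ∈ hfin.toFinset := by
      intro j hj
      simp only [Finset.mem_range] at hj
      rw [Set.Finite.mem_toFinset]
      refine ⟨hgZ j, ?_⟩
      simp only [Set.mem_Ico]
      have h1 := hgbd j
      constructor
      · omega
      · have : (j + 1) * L ≤ N * L := Nat.mul_le_mul_right L (by omega)
        omega
    have hinj : Set.InjOn g (Finset.range N) := by
      intro x _ y _ hxy
      by_contra hne
      rcases Nat.lt_or_ge x y with h | h
      · have h1 := (hgbd x).2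
        have h2 := (hgbd y).1
        have : (x + 1) * L ≤ y * L := Nat.mul_le_mul_right L (by omega)
        omega
      · have hlt : y < x := by omega
        have h1 := (hgbd y).2
        have h2 := (hgbd x).1
        have : (y + 1) * L ≤ x * L := Nat.mul_le_mul_right L (by omega)
        omega
    have hNle : N ≤ hfin.toFinset.card := by
      simpa using Finset.card_le_card_of_injOn g hmem hinj
    have hcard' : Nat.card Sfin = hfin.toFinset.card := Nat.card_eq_card_finite_toFinset hfin
    have hle : (N : ℝ) ≤ ε * (N * L) := by
      calc (N : ℝ) ≤ (Nat.card Sfin : ℝ) := by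
            rw [hcard']; exact_mod_cast hNle
        _ ≤ ε * (N * L) := by exact_mod_cast hcard
    have hεL : ε * (N * L) = N / 2 := by
      rw [hε]
      have : (L : ℝ) ≠ 0 := by positivity
      field_simp
    rw [hεL] at hle
    have : (1 : ℝ) ≤ (N : ℝ) := by exact_mod_cast (by omega : 1 ≤ N)
    linarith
  obtain ⟨m, hm⟩ := hwin
  -- equate the two sums over the window
  have hsum : (⌊α * (m + L) + ρ⌋ - ⌊α * m + ρ⌋ - L * ⌊α⌋ : ℤ) = k * S := by
    rw [← sturmian_telescope α ρ a ha m L]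
    rw [show (∑ i ∈ Finset.range L, a (m + i)) = ∑ i ∈ Finset.range L, p (m + i) from
      Finset.sum_congr rfl fun i hi => hm i (Finset.mem_range.mp hi)]
    exact periodic_multi_block_sum p d hd hp m k
  -- derive the real inequality contradiction
  set A : ℤ := ⌊α * (m + L) + ρ⌋ with hA
  set B : ℤ := ⌊α * m + ρ⌋ with hB
  have hA1 : (A : ℝ) ≤ α * (m + L) + ρ := Int.floor_le _
  have hA2 : α * (m + L) + ρ < A + 1 := Int.lt_floor_add_one _
  have hB1 : (B : ℝ) ≤ α * m + ρ := Int.floor_le _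
  have hB2 : α * m + ρ < B + 1 := Int.lt_floor_add_one _
  have hsumR : (A : ℝ) - B - L * ⌊α⌋ = k * S := by exact_mod_cast hsum
  have hLR : (L : ℝ) = k * d := by exact_mod_cast hL
  have hkcval : (k : ℝ) * c = α * (m + L) - α * m - (L * ⌊α⌋ + k * S) := by
    rw [hc, hLR]; ring
  have habs : |(k : ℝ) * c| < 1 := by
    rw [abs_lt]
    constructor <;> [nlinarith; nlinarith]
  rw [abs_mul, Nat.abs_cast] at habs
  linarith
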